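/- Let ξ : ℝ → ℝ be continuous with ξ(x) ≥ a for all x ∈ ℝ, for some constant a > 0, and let κ > 0 be a constant. Suppose ε : ℝ → ℝ is differentiable on [0,∞) and satisfies ε'(t) = -ξ(ε(t))·ε(t) - κ·∫₀ᵗ ε(s) ds for all t ≥ 0. Then ε(t) tends to 0 as t → ∞. -/

import Mathlib

open MeasureTheory intervalIntegral Filter

lemma ftc_Ici {f : ℝ → ℝ} (hf : ContinuousOn f (Set.Ici 0)) {t : ℝ} (ht : 0 ≤ t) :
    HasDerivWithinAt (fun u => ∫ s in (0:ℝ)..u, f s) (f t) (Set.Ici 0) t := by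
  have hint : IntervalIntegrable f volume 0 t := by
    apply ContinuousOn.intervalIntegrable
    rw [Set.uIcc_of_le ht]; exact hf.mono Set.Icc_subset_Ici_self
  have hmeasIci : AEStronglyMeasurable f (volume.restrict (Set.Ici 0)) :=
    hf.aestronglyMeasurable measurableSet_Ici
  rcases eq_or_lt_of_le ht with rfl | ht'
  · exact integral_hasDerivWithinAt_right hint
      ⟨Set.Ici 0, mem_of_superset self_mem_nhdsWithin Set.Ioi_subset_Ici_self, hmeasIci⟩
      ((hf 0 Set.self_mem_Ici).mono Set.Ioi_subset_Ici_self)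
  · have hnb : Set.Ici (0:ℝ) ∈ nhds t :=
      mem_of_superset (isOpen_Ioi.mem_nhds ht') Set.Ioi_subset_Ici_self
    exact (integral_hasDerivAt_right hint ⟨Set.Ici 0, hnb, hmeasIci⟩
      (hf.continuousAt hnb)).hasDerivWithinAt

set_option maxHeartbeats 1000000 in
theorem aztnd_global_convergence_scalar
    (a : ℝ) (ha : 0 < a)
    (ξ : ℝ → ℝ) (hξc : Continuous ξ) (hξa : ∀ x : ℝ, a ≤ ξ x)
    (κ : ℝ) (hκ : 0 < κ)
    (ε : ℝ → ℝ)
    (hdyn : ∀ t : ℝ, 0 ≤ t →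
      HasDerivAt ε (-(ξ (ε t)) * ε t - κ * ∫ s in (0:ℝ)..t, ε s) t) :
    Tendsto ε atTop (nhds 0) := by
  have hεc : ContinuousOn ε (Set.Ici 0) := fun t ht =>
    ((hdyn t ht).continuousAt).continuousWithinAt
  set y : ℝ → ℝ := fun t => ∫ s in (0:ℝ)..t, ε s with hy_def
  have hε2c : ContinuousOn (fun s => ε s ^ 2) (Set.Ici 0) := hεc.pow 2
  set F : ℝ → ℝ := fun t => ∫ s in (0:ℝ)..t, ε s ^ 2 with hF_def
  have hy : ∀ t ∈ Set.Ici (0:ℝ), HasDerivWithinAt y (ε t) (Set.Ici 0) t :=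
    fun t ht => ftc_Ici hεc ht
  have hF : ∀ t ∈ Set.Ici (0:ℝ), HasDerivWithinAt F (ε t ^ 2) (Set.Ici 0) t :=
    fun t ht => ftc_Ici hε2c ht
  have hnb : ∀ {t : ℝ}, 0 < t → Set.Ici (0:ℝ) ∈ nhds t := fun ht =>
    mem_of_superset (isOpen_Ioi.mem_nhds ht) Set.Ioi_subset_Ici_self
  set G : ℝ → ℝ := fun t => ε t ^ 2 + κ * y t ^ 2 + 2 * a * F t with hG_def
  have hG : ∀ t ∈ Set.Ici (0:ℝ),
      HasDerivWithinAt G (2 * (a - ξ (ε t)) * ε t ^ 2) (Set.Ici 0) t := by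
    intro t ht
    have hd : HasDerivAt ε (-(ξ (ε t)) * ε t - κ * y t) t := hdyn t ht
    have h1 := (hd.hasDerivWithinAt (s := Set.Ici 0)).pow 2
    have h2 := ((hy t ht).pow 2).const_mul κ
    have h3 := (hF t ht).const_mul (2 * a)
    have h4 := (h1.add h2).add h3
    refine h4.congr_deriv ?_
    norm_num
    ring
  -- G is antitone on [0,∞)
  have hGanti : AntitoneOn G (Set.Ici 0) := by
    apply antitoneOn_of_deriv_nonpos (convex_Ici 0)
      (fun t ht => (hG t ht).continuousWithinAt)
    · intro t ht
      rw [interior_Ici] at ht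
      exact ((hG t (Set.mem_Ici.mpr ht.le)).hasDerivAt (hnb ht)).differentiableAt.differentiableWithinAt
    · intro t ht
      rw [interior_Ici] at ht
      rw [((hG t (Set.mem_Ici.mpr ht.le)).hasDerivAt (hnb ht)).deriv]
      nlinarith [hξa (ε t), sq_nonneg (ε t)]
  -- F is monotone on [0,∞)
  have hFmono : MonotoneOn F (Set.Ici 0) := by
    apply monotoneOn_of_deriv_nonneg (convex_Ici 0)
      (fun t ht => (hF t ht).continuousWithinAt)
    · intro t ht
      rw [interior_Ici] at ht
      exact ((hF t (Set.mem_Ici.mpr ht.le)).hasDerivAt (hnb ht)).differentiableAt.differentiableWithinAt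
    · intro t ht
      rw [interior_Ici] at ht
      rw [((hF t (Set.mem_Ici.mpr ht.le)).hasDerivAt (hnb ht)).deriv]
      positivity
  have hy0 : y 0 = 0 := integral_same
  have hF0 : F 0 = 0 := integral_same
  set V0 : ℝ := ε 0 ^ 2 with hV0_def
  have hV0 : 0 ≤ V0 := sq_nonneg _
  have hFnonneg : ∀ t : ℝ, 0 ≤ t → 0 ≤ F t := fun t ht =>
    intervalIntegral.integral_nonneg ht fun s _ => sq_nonneg _
  have hGle : ∀ t : ℝ, 0 ≤ t → ε t ^ 2 + κ * y t ^ 2 + 2 * a * F t ≤ V0 := by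
    intro t ht
    have h := hGanti Set.self_mem_Ici ht ht
    simp only [hG_def] at h
    rw [hy0, hF0] at h
    nlinarith [h]
  have hεbd : ∀ t : ℝ, 0 ≤ t → ε t ^ 2 ≤ V0 := by
    intro t ht
    have := hGle t ht
    nlinarith [sq_nonneg (y t), hFnonneg t ht]
  have hybd : ∀ t : ℝ, 0 ≤ t → κ * y t ^ 2 ≤ V0 := by
    intro t ht
    have := hGle t ht
    nlinarith [sq_nonneg (ε t), hFnonneg t ht]
  have hFbd : ∀ t : ℝ, 0 ≤ t → F t ≤ V0 / (2 * a) := by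
    intro t ht
    have := hGle t ht
    rw [le_div_iff₀ (by positivity)]
    nlinarith [sq_nonneg (ε t), sq_nonneg (y t)]
  set C : ℝ := Real.sqrt V0 with hC_def
  have hC0 : 0 ≤ C := Real.sqrt_nonneg _
  have hCbd : ∀ t : ℝ, 0 ≤ t → |ε t| ≤ C := by
    intro t ht
    rw [hC_def, ← Real.sqrt_sq_eq_abs]
    exact Real.sqrt_le_sqrt (hεbd t ht)
  set Cy : ℝ := Real.sqrt (V0 / κ) with hCy_def
  have hCy0 : 0 ≤ Cy := Real.sqrt_nonneg _
  have hCybd : ∀ t : ℝ, 0 ≤ t → |y t| ≤ Cy := by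
    intro t ht
    rw [hCy_def, ← Real.sqrt_sq_eq_abs]
    apply Real.sqrt_le_sqrt
    rw [le_div_iff₀ hκ]
    nlinarith [hybd t ht]
  obtain ⟨B, hB⟩ := (isCompact_Icc (a := -C) (b := C)).exists_bound_of_continuousOn
    hξc.continuousOn
  have hB0 : 0 ≤ B := le_trans (norm_nonneg _) (hB (-C) ⟨le_rfl, by linarith⟩)
  set M : ℝ := B * C + κ * Cy + 1 with hM_def
  have hM : 0 < M := by positivity
  have hbound : ∀ x ∈ Set.Ici (0:ℝ), ‖-(ξ (ε x)) * ε x - κ * y x‖ ≤ M := by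
    intro x hx
    have h1 : |ξ (ε x)| ≤ B := by
      have := abs_le.mp (hCbd x hx)
      simpa using hB (ε x) ⟨this.1, this.2⟩
    have h2 : |ε x| ≤ C := hCbd x hx
    have h3 : |y x| ≤ Cy := hCybd x hx
    rw [Real.norm_eq_abs, sub_eq_add_neg]
    refine le_trans (abs_add_le _ _) ?_
    rw [abs_neg, abs_mul, abs_mul, abs_neg, abs_of_pos hκ]
    nlinarith [abs_nonneg (ξ (ε x)), abs_nonneg (ε x), abs_nonneg (y x)]
  have hLip : ∀ s t : ℝ, 0 ≤ s → 0 ≤ t → |ε t - ε s| ≤ M * |t - s| := by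
    intro s t hs ht
    have := Convex.norm_image_sub_le_of_norm_hasDerivWithin_le
      (f := ε) (f' := fun x => -(ξ (ε x)) * ε x - κ * y x)
      (fun x hx => (hdyn x hx).hasDerivWithinAt) hbound (convex_Ici 0) hs ht
    simpa [Real.norm_eq_abs] using this
  -- Barbalat argument
  rw [Metric.tendsto_atTop]
  intro c hc
  by_contra hcon
  push_neg at hcon
  simp only [Real.dist_eq, sub_zero] at hcon
  set h : ℝ := c / (2 * M) with hh_def
  have hh : 0 < h := by positivity
  set δ : ℝ := (c / 2) ^ 2 * h with hδ_def
  have hδ : 0 < δ := by positivity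
  have hMh : M * h = c / 2 := by
    rw [hh_def]; field_simp
  have hii : ∀ u v : ℝ, 0 ≤ u → 0 ≤ v →
      IntervalIntegrable (fun s => ε s ^ 2) volume u v := by
    intro u v hu hv
    apply ContinuousOn.intervalIntegrable
    apply hε2c.mono
    intro z hz
    rcases le_total u v with huv | huv
    · rw [Set.uIcc_of_le huv] at hz; exact le_trans hu hz.1
    · rw [Set.uIcc_of_ge huv] at hz; exact le_trans hv hz.1
  have key : ∀ n : ℕ, ∃ t : ℝ, 0 ≤ t ∧ (n : ℝ) * δ ≤ F (t + h) := by
    intro n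
    induction n with
    | zero => exact ⟨0, le_rfl, by simpa using hFnonneg h hh.le⟩
    | succ n ih =>
      obtain ⟨t, ht0, htF⟩ := ih
      obtain ⟨t', ht'ge, ht'c⟩ := hcon (t + h)
      have ht'0 : 0 ≤ t' := le_trans (by linarith) ht'ge
      have hlow : ∀ s ∈ Set.Icc t' (t' + h), (c / 2) ^ 2 ≤ ε s ^ 2 := by
        intro s hs
        have hs0 : 0 ≤ s := le_trans ht'0 hs.1
        have h1 : |ε s - ε t'| ≤ M * |s - t'| := hLip t' s ht'0 hs0
        have h2 : |s - t'| ≤ h := by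
          rw [abs_of_nonneg (by linarith [hs.1])]
          linarith [hs.2]
        have h3 : |ε s - ε t'| ≤ c / 2 := by
          calc |ε s - ε t'| ≤ M * |s - t'| := h1
            _ ≤ M * h := mul_le_mul_of_nonneg_left h2 hM.le
            _ = c / 2 := hMh
        have h4 : c / 2 ≤ |ε s| := by
          have := abs_sub_abs_le_abs_sub (ε t') (ε s)
          rw [abs_sub_comm (ε t') (ε s)] at this
          linarith
        calc (c / 2) ^ 2 ≤ |ε s| ^ 2 := by nlinarith
          _ = ε s ^ 2 := sq_abs _
      have hFadd : F (t' + h) = F t' + ∫ s in t'..t' + h, ε s ^ 2 :=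
        (integral_add_adjacent_intervals (hii 0 t' le_rfl ht'0)
          (hii t' (t' + h) ht'0 (by linarith))).symm
      have hstep : δ ≤ ∫ s in t'..t' + h, ε s ^ 2 := by
        have hm := intervalIntegral.integral_mono_on (by linarith : t' ≤ t' + h)
          (_root_.intervalIntegrable_const (c := (c / 2) ^ 2))
          (hii t' (t' + h) ht'0 (by linarith))
          (fun s hs => hlow s hs)
        rw [intervalIntegral.integral_const, smul_eq_mul] at hm
        rw [hδ_def]
        calc (c / 2) ^ 2 * h = (t' + h - t') * (c / 2) ^ 2 := by ring
          _ ≤ _ := hm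
      have hFm : F (t + h) ≤ F t' := hFmono
        (Set.mem_Ici.mpr (by linarith)) (Set.mem_Ici.mpr ht'0) ht'ge
      refine ⟨t', ht'0, ?_⟩
      push_cast
      rw [hFadd]
      linarith
  obtain ⟨n, hn⟩ := exists_nat_gt (V0 / (2 * a) / δ)
  obtain ⟨t, ht0, htF⟩ := key n
  have hle : F (t + h) ≤ V0 / (2 * a) := hFbd (t + h) (by linarith)
  rw [div_lt_iff₀ hδ] at hn
  linarith
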